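/- Let n, N ≥ 1, let L be a set of n×n real matrices, and let U ⊆ (ℝ^n)^N be an open set. Suppose f¹, …, fⁿ : U → ℝ^n are differentiable maps such that (a) each f^j satisfies the joint equivariance equation for every l ∈ L, and (b) for every X ∈ U the vectors f¹(X), …, fⁿ(X) are linearly independent in ℝ^n. Let f : U → ℝ^n be a differentiable map satisfying the joint equivariance equation for every l ∈ L, and let φ¹, …, φⁿ : U → ℝ be differentiable functions with f(X) = Σ_{j=1}^n φ^j(X)·f^j(X) for all X ∈ U. Then each φ^j is jointly radial for every l ∈ L: for every X = (X_1,…,X_N) ∈ U and every l ∈ L, the derivative of φ^j at X evaluated at the vector (l·X_1, …, l·X_N) is zero. -/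

import Mathlib

/-- A map `f : (ℝ^n)^N → ℝ^n` satisfies the joint equivariance equation for the
matrix `l` at every point of `U` if `Df(X)(l·X_1, …, l·X_N) = l·f(X)` on `U`. -/
def JointlyEquivariantOn (n N : ℕ) (l : Matrix (Fin n) (Fin n) ℝ)
    (U : Set (Fin N → Fin n → ℝ)) (f : (Fin N → Fin n → ℝ) → (Fin n → ℝ)) : Prop :=
  ∀ X ∈ U, fderiv ℝ f X (fun i => l.mulVec (X i)) = l.mulVec (f X)

/-- A function `φ : (ℝ^n)^N → ℝ` is jointly radial for the matrix `l` on `U` if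
`Dφ(X)(l·X_1, …, l·X_N) = 0` on `U`. -/
def JointlyRadialOn (n N : ℕ) (l : Matrix (Fin n) (Fin n) ℝ)
    (U : Set (Fin N → Fin n → ℝ)) (φ : (Fin N → Fin n → ℝ) → ℝ) : Prop :=
  ∀ X ∈ U, fderiv ℝ φ X (fun i => l.mulVec (X i)) = 0

/-- Given `n` pointwise independent jointly equivariant solutions
`f¹, …, fⁿ` on an open set `U ⊆ (ℝ^n)^N`, the coefficients `φ¹, …, φⁿ` of any jointly
equivariant solution `f = Σ_j φ^j • f^j` are jointly radial for every `l ∈ L`. -/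
theorem stmt_3 (n N : ℕ) (hn : 1 ≤ n) (hN : 1 ≤ N)
    (L : Set (Matrix (Fin n) (Fin n) ℝ))
    (U : Set (Fin N → Fin n → ℝ)) (hU : IsOpen U)
    (fs : Fin n → (Fin N → Fin n → ℝ) → (Fin n → ℝ))
    (hfs_diff : ∀ j, ∀ X ∈ U, DifferentiableAt ℝ (fs j) X)
    (hfs_equiv : ∀ j, ∀ l ∈ L, JointlyEquivariantOn n N l U (fs j))
    (hfs_indep : ∀ X ∈ U, LinearIndependent ℝ (fun j => fs j X))
    (f : (Fin N → Fin n → ℝ) → (Fin n → ℝ))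
    (hf_diff : ∀ X ∈ U, DifferentiableAt ℝ f X)
    (hf_equiv : ∀ l ∈ L, JointlyEquivariantOn n N l U f)
    (φ : Fin n → (Fin N → Fin n → ℝ) → ℝ)
    (hφ_diff : ∀ j, ∀ X ∈ U, DifferentiableAt ℝ (φ j) X)
    (hsum : ∀ X ∈ U, f X = ∑ j, φ j X • fs j X) :
    ∀ j, ∀ l ∈ L, JointlyRadialOn n N l U (φ j) := by
  intro j l hl X hX
  set v : Fin N → Fin n → ℝ := fun i => l.mulVec (X i) with hv
  -- f agrees with the sum near X
  have heq : f =ᶠ[nhds X] (fun Y => ∑ k, φ k Y • fs k Y) := by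
    filter_upwards [hU.mem_nhds hX] with Y hY using hsum Y hY
  have hterm : ∀ k : Fin n, DifferentiableAt ℝ (fun Y => φ k Y • fs k Y) X :=
    fun k => (hφ_diff k X hX).smul (hfs_diff k X hX)
  have hd : fderiv ℝ f X = ∑ k, fderiv ℝ (fun Y => φ k Y • fs k Y) X := by
    rw [heq.fderiv_eq]
    exact fderiv_fun_sum (fun k _ => hterm k)
  have hdsmul : ∀ k : Fin n, (fderiv ℝ (fun Y => φ k Y • fs k Y) X) v
      = φ k X • (fderiv ℝ (fs k) X v) + (fderiv ℝ (φ k) X v) • fs k X := by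
    intro k
    rw [fderiv_fun_smul (hφ_diff k X hX) (hfs_diff k X hX)]
    simp
  have hfsv : ∀ k : Fin n, fderiv ℝ (fs k) X v = l.mulVec (fs k X) :=
    fun k => hfs_equiv k l hl X hX
  have hfv : fderiv ℝ f X v = l.mulVec (f X) := hf_equiv l hl X hX
  have key : ∑ k, (fderiv ℝ (φ k) X v) • fs k X = 0 := by
    have h1 : fderiv ℝ f X v = ∑ k, (φ k X • l.mulVec (fs k X)
        + (fderiv ℝ (φ k) X v) • fs k X) := by
      rw [hd]
      simp only [ContinuousLinearMap.sum_apply]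
      refine Finset.sum_congr rfl fun k _ => ?_
      rw [hdsmul k, hfsv k]
    have h2 : l.mulVec (f X) = ∑ k, φ k X • l.mulVec (fs k X) := by
      rw [hsum X hX, ← Matrix.mulVecLin_apply, map_sum]
      simp [Matrix.mulVecLin_apply]
    rw [hfv, h2, Finset.sum_add_distrib] at h1
    exact (left_eq_add.mp h1)
  have key' : ∑ k, (fderiv ℝ (φ k) X v) • fs k X = 0 := key
  exact Fintype.linearIndependent_iff.mp (hfs_indep X hX)
    (fun k => fderiv ℝ (φ k) X v) key' j
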